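/- Assume ε_Ω ≤ 1/2 and let Ω̃ be a ground state of the effective Hamiltonian PHP. Then for every unit vector ψ with Pψ = ψ and ⟪Ω̃, ψ⟫ = 0, one has Re⟪ψ, Hψ⟫ − Re⟪Ω̃, HΩ̃⟫ ≥ (1 − ε_Ω) Δ − 2 ε_H; that is, the spectral gap of the effective Hamiltonian is at least (1 − ε_Ω)Δ − 2ε_H. -/

import Mathlib

/-- Spectral-gap preservation under projection (Lemma 15 of the paper): let `H` be
a bounded self-adjoint operator on a complex Hilbert space with ground state `Ω`
(`HΩ = 0`, `‖Ω‖ = 1`) and spectral gap `Δ > 0`, and let `P` be an orthogonal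
projection with `PΩ ≠ 0`. Set `ε_Ω = 1 - ‖PΩ‖²`, `ε_H = Re⟪PΩ, H(PΩ)⟫/‖PΩ‖²`.
If `ε_Ω ≤ 1/2`, then for any ground state `Ω̃` of `PHP` and any unit vector `ψ`
in the range of `P` orthogonal to `Ω̃`,
`Re⟪ψ, Hψ⟫ - Re⟪Ω̃, HΩ̃⟫ ≥ (1 - ε_Ω)Δ - 2ε_H`. -/
theorem stmt_15 {E : Type*} [NormedAddCommGroup E] [InnerProductSpace ℂ E]
    [CompleteSpace E]
    (H : E →L[ℂ] E) (hHsa : ∀ ψ χ : E, (inner ℂ (H ψ) χ : ℂ) = inner ℂ ψ (H χ))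
    (Ω : E) (hΩnorm : ‖Ω‖ = 1) (hHΩ : H Ω = 0)
    (Δ : ℝ) (hΔ : 0 < Δ)
    (hgap : ∀ ψ : E, (inner ℂ Ω ψ : ℂ) = 0 →
      Δ * ‖ψ‖ ^ 2 ≤ ((inner ℂ ψ (H ψ) : ℂ)).re)
    (P : E →L[ℂ] E) (hPsa : ∀ ψ χ : E, (inner ℂ (P ψ) χ : ℂ) = inner ℂ ψ (P χ))
    (hPidem : ∀ ψ : E, P (P ψ) = P ψ) (hPΩ : P Ω ≠ 0)
    (hεΩ : 1 - ‖P Ω‖ ^ 2 ≤ 1 / 2)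
    (Ω' : E) (hΩ'norm : ‖Ω'‖ = 1) (hΩ'P : P Ω' = Ω')
    (hΩ'gs : ∀ ψ : E, ‖ψ‖ = 1 → P ψ = ψ →
      ((inner ℂ Ω' (H Ω') : ℂ)).re ≤ ((inner ℂ ψ (H ψ) : ℂ)).re) :
    ∀ ψ : E, ‖ψ‖ = 1 → P ψ = ψ → (inner ℂ Ω' ψ : ℂ) = 0 →
      (1 - (1 - ‖P Ω‖ ^ 2)) * Δ -
          2 * (((inner ℂ (P Ω) (H (P Ω)) : ℂ)).re / ‖P Ω‖ ^ 2) ≤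
        ((inner ℂ ψ (H ψ) : ℂ)).re - ((inner ℂ Ω' (H Ω') : ℂ)).re := by
  intro ψ hψnorm hψP hψorth
  have hΩΩ : (inner ℂ Ω Ω : ℂ) = 1 := by
    rw [inner_self_eq_norm_sq_to_K, hΩnorm]; norm_num
  have hnpos : 0 < ‖P Ω‖ := norm_pos_iff.mpr hPΩ
  -- P Ω has norm ≤ 1
  have hn1 : ‖P Ω‖ ≤ 1 := by
    have h1 : (inner ℂ (P Ω) (P Ω) : ℂ) = inner ℂ Ω (P Ω) := by
      rw [hPsa, hPidem]
    have h2 : ‖P Ω‖ ^ 2 = ((inner ℂ Ω (P Ω) : ℂ)).re := by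
      rw [← h1, inner_self_eq_norm_sq_to_K]
      norm_cast
    have h3 : ((inner ℂ Ω (P Ω) : ℂ)).re ≤ ‖(inner ℂ Ω (P Ω) : ℂ)‖ := Complex.re_le_norm _
    have h4 : ‖(inner ℂ Ω (P Ω) : ℂ)‖ ≤ ‖Ω‖ * ‖P Ω‖ := norm_inner_le_norm _ _
    nlinarith
  -- key gap estimate for arbitrary unit vectors
  have key : ∀ φ : E, ‖φ‖ = 1 →
      Δ * (1 - ‖(inner ℂ Ω φ : ℂ)‖ ^ 2) ≤ ((inner ℂ φ (H φ) : ℂ)).re := by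
    intro φ hφ
    set c : ℂ := inner ℂ Ω φ with hc
    have hΩw : (inner ℂ Ω (φ - c • Ω) : ℂ) = 0 := by
      rw [inner_sub_right, inner_smul_right, hΩΩ]
      ring
    have hwnorm : ‖φ - c • Ω‖ ^ 2 = 1 - ‖c‖ ^ 2 := by
      have h := @norm_sub_sq ℂ E _ _ _ φ (c • Ω)
      have hre : ((inner ℂ φ (c • Ω) : ℂ)).re = ‖c‖ ^ 2 := by
        rw [inner_smul_right, ← inner_conj_symm, ← hc, Complex.mul_conj,
          Complex.ofReal_re, Complex.normSq_eq_norm_sq]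
      rw [norm_smul] at h
      simp only [RCLike.re_to_complex] at h
      rw [h, hre, hφ, hΩnorm]
      ring
    have hΩHφ : (inner ℂ Ω (H φ) : ℂ) = 0 := by
      rw [← hHsa, hHΩ, inner_zero_left]
    have hHw : H (φ - c • Ω) = H φ := by
      rw [map_sub, map_smul, hHΩ, smul_zero, sub_zero]
    have hen : (inner ℂ (φ - c • Ω) (H (φ - c • Ω)) : ℂ) = inner ℂ φ (H φ) := by
      rw [hHw, inner_sub_left, inner_smul_left, hΩHφ, mul_zero, sub_zero]
    have := hgap (φ - c • Ω) hΩw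
    rw [hwnorm, hen] at this
    exact this
  set b : ℂ := inner ℂ Ω Ω' with hb
  set a : ℂ := inner ℂ Ω ψ with ha
  -- ground state energy bounded by ε_H
  have hE0 : ((inner ℂ Ω' (H Ω') : ℂ)).re ≤
      ((inner ℂ (P Ω) (H (P Ω)) : ℂ)).re / ‖P Ω‖ ^ 2 := by
    set u : E := ((‖P Ω‖⁻¹ : ℝ) : ℂ) • (P Ω) with hu
    have hunorm : ‖u‖ = 1 := by
      rw [hu, norm_smul]
      simp [norm_inv, abs_of_pos hnpos]
      field_simp
    have huP : P u = u := by
      rw [hu, map_smul, hPidem]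
    have hue : ((inner ℂ u (H u) : ℂ)).re =
        ((inner ℂ (P Ω) (H (P Ω)) : ℂ)).re / ‖P Ω‖ ^ 2 := by
      rw [hu, map_smul, inner_smul_left, inner_smul_right]
      rw [Complex.conj_ofReal]
      rw [← mul_assoc, ← Complex.ofReal_mul]
      rw [Complex.re_ofReal_mul, div_eq_mul_inv, pow_two, mul_inv]
      ring
    have := hΩ'gs u hunorm huP
    rw [hue] at this
    exact this
  -- overlap of Ω' with Ω
  have hbΔ : Δ * (1 - ‖b‖ ^ 2) ≤ ((inner ℂ Ω' (H Ω') : ℂ)).re := key Ω' hΩ'norm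
  have haΔ : Δ * (1 - ‖a‖ ^ 2) ≤ ((inner ℂ ψ (H ψ) : ℂ)).re := key ψ hψnorm
  -- |a|² ≤ ‖PΩ‖² - |b|²
  have hab : ‖a‖ ^ 2 ≤ ‖P Ω‖ ^ 2 - ‖b‖ ^ 2 := by
    have h1 : (inner ℂ (P Ω) ψ : ℂ) = a := by
      rw [hPsa, hψP, ha]
    have h2 : (inner ℂ (P Ω) Ω' : ℂ) = b := by
      rw [hPsa, hΩ'P, hb]
    have h3 : a = inner ℂ (P Ω - (starRingEnd ℂ b) • Ω') ψ := by
      rw [inner_sub_left, inner_smul_left, h1, hψorth]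
      simp
    have h4 : ‖P Ω - (starRingEnd ℂ b) • Ω'‖ ^ 2 = ‖P Ω‖ ^ 2 - ‖b‖ ^ 2 := by
      have h := @norm_sub_sq ℂ E _ _ _ (P Ω) ((starRingEnd ℂ b) • Ω')
      have hre : ((inner ℂ (P Ω) ((starRingEnd ℂ b) • Ω') : ℂ)).re = ‖b‖ ^ 2 := by
        rw [inner_smul_right, h2, mul_comm, Complex.mul_conj,
          Complex.ofReal_re, Complex.normSq_eq_norm_sq]
      rw [norm_smul] at h
      simp only [RCLike.re_to_complex] at h
      rw [h, hre, hΩ'norm]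
      simp
      ring
    have h5 : ‖a‖ ≤ ‖P Ω - (starRingEnd ℂ b) • Ω'‖ := by
      rw [h3]
      calc ‖(inner ℂ (P Ω - (starRingEnd ℂ b) • Ω') ψ : ℂ)‖
          ≤ ‖P Ω - (starRingEnd ℂ b) • Ω'‖ * ‖ψ‖ := norm_inner_le_norm _ _
        _ = ‖P Ω - (starRingEnd ℂ b) • Ω'‖ := by rw [hψnorm, mul_one]
    nlinarith [norm_nonneg a, norm_nonneg (P Ω - (starRingEnd ℂ b) • Ω')]
  have hA := mul_le_mul_of_nonneg_left hab hΔ.le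
  have hn2 : ‖P Ω‖ ^ 2 ≤ 1 := by nlinarith
  have hΔnn : Δ * ‖P Ω‖ ^ 2 ≤ Δ := mul_le_of_le_one_right hΔ.le hn2
  linarith
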